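/- Let X = X(G, C) be a normal Cayley graph of a finite group G and let H be the maximal strongly cospectral subgroup (the subgroup of vertices strongly cospectral to the identity). If m is the multiplicity of any eigenvalue of X, then |H| ≤ |G|/m. -/

import Mathlib

open Matrix

/-- `E` is the orthogonal projection onto the eigenspace of `A` for the eigenvalue `μ`. -/
def IsEigenProjection {V : Type*} [Fintype V] (A : Matrix V V ℝ) (μ : ℝ)
    (E : Matrix V V ℝ) : Prop :=
  E * E = E ∧ E.IsSymm ∧
    (∀ x : V → ℝ, A.mulVec (E.mulVec x) = μ • E.mulVec x) ∧
    (∀ y : V → ℝ, A.mulVec y = μ • y → E.mulVec y = y)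

/-- Vertices `u` and `v` are strongly cospectral: `E e_u = ± E e_v` for every spectral
idempotent `E` of `A`. -/
def StronglyCospectral {V : Type*} [Fintype V] [DecidableEq V]
    (A : Matrix V V ℝ) (u v : V) : Prop :=
  ∀ (μ : ℝ) (E : Matrix V V ℝ), IsEigenProjection A μ E →
    E.mulVec (Pi.single u 1) = E.mulVec (Pi.single v 1) ∨
    E.mulVec (Pi.single u 1) = -E.mulVec (Pi.single v 1)

/-- The adjacency matrix of the Cayley graph `X(G, C)`: `g ~ h` iff `h * g⁻¹ ∈ C`. -/
def cayleyAdj {G : Type*} [Group G] [Fintype G] [DecidableEq G] (C : Finset G) :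
    Matrix G G ℝ :=
  Matrix.of fun g h => if h * g⁻¹ ∈ C then 1 else 0

noncomputable section AuxEigenProj

variable {V : Type*} [Fintype V] [DecidableEq V]

/-- The identity linear equivalence between `V → ℝ` and Euclidean space. -/
abbrev eucEquiv (V : Type*) [Fintype V] : (V → ℝ) ≃ₗ[ℝ] EuclideanSpace ℝ V :=
  (WithLp.linearEquiv 2 ℝ (V → ℝ)).symm

/-- The eigenspace of `toLin' A` for `μ`, viewed inside Euclidean space. -/
def eigSp (A : Matrix V V ℝ) (μ : ℝ) : Submodule ℝ (EuclideanSpace ℝ V) :=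
  (Module.End.eigenspace (Matrix.toLin' A) μ).comap
    ((eucEquiv V).symm : EuclideanSpace ℝ V →ₗ[ℝ] (V → ℝ))

lemma mem_eigSp {A : Matrix V V ℝ} {μ : ℝ} {v : EuclideanSpace ℝ V} :
    v ∈ eigSp A μ ↔ A.mulVec ((eucEquiv V).symm v) = μ • ((eucEquiv V).symm v) := by
  rw [eigSp, Submodule.mem_comap, Module.End.mem_eigenspace_iff, Matrix.toLin'_apply]; rfl

lemma finrank_eigSp (A : Matrix V V ℝ) (μ : ℝ) :
    Module.finrank ℝ (eigSp A μ)
      = Module.finrank ℝ (Module.End.eigenspace (Matrix.toLin' A) μ) := by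
  rw [eigSp, Submodule.comap_equiv_eq_map_symm]
  exact LinearEquiv.finrank_map_eq _ _

/-- The orthogonal projection onto the eigenspace, as a linear endomorphism. -/
def Pmap (A : Matrix V V ℝ) (μ : ℝ) : EuclideanSpace ℝ V →ₗ[ℝ] EuclideanSpace ℝ V :=
  (eigSp A μ).subtype ∘ₗ (Submodule.orthogonalProjectionOnto (eigSp A μ)).toLinearMap

/-- The orthogonal projection onto the eigenspace, as a matrix. -/
def eigProj (A : Matrix V V ℝ) (μ : ℝ) : Matrix V V ℝ :=
  Matrix.of fun i j => Pmap A μ (EuclideanSpace.single j 1) i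

lemma Pmap_isProj (A : Matrix V V ℝ) (μ : ℝ) :
    LinearMap.IsProj (eigSp A μ) (Pmap A μ) := by
  constructor
  · intro x; exact (Submodule.orthogonalProjectionOnto (eigSp A μ) x).2
  · intro x hx
    show ((Submodule.orthogonalProjectionOnto (eigSp A μ) x : EuclideanSpace ℝ V)) = x
    exact Submodule.starProjection_eq_self_iff.mpr hx

lemma Pmap_idem (A : Matrix V V ℝ) (μ : ℝ) (v : EuclideanSpace ℝ V) :
    Pmap A μ (Pmap A μ v) = Pmap A μ v :=
  (Pmap_isProj A μ).map_id _ ((Pmap_isProj A μ).map_mem v)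

lemma eucEquiv_eq_sum (x : V → ℝ) :
    eucEquiv V x = ∑ j, x j • EuclideanSpace.single j (1:ℝ) := by
  ext i
  rw [show ((∑ j, x j • EuclideanSpace.single j (1:ℝ)) i)
      = ∑ j, (x j • EuclideanSpace.single j (1:ℝ)) i from by
        rw [WithLp.ofLp_sum]; exact Finset.sum_apply i _ _]
  simp [EuclideanSpace.single_apply]

lemma mulVec_eigProj (A : Matrix V V ℝ) (μ : ℝ) (x : V → ℝ) (i : V) :
    (eigProj A μ).mulVec x i = Pmap A μ (eucEquiv V x) i := by
  rw [eucEquiv_eq_sum, map_sum]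
  rw [show ((∑ j, Pmap A μ (x j • EuclideanSpace.single j (1:ℝ))) i)
      = ∑ j, (Pmap A μ (x j • EuclideanSpace.single j (1:ℝ))) i from by
        rw [WithLp.ofLp_sum]; exact Finset.sum_apply i _ _]
  simp only [_root_.map_smul]
  simp [Matrix.mulVec, dotProduct, eigProj, mul_comm]

lemma eigProj_symm (A : Matrix V V ℝ) (μ : ℝ) (i j : V) :
    eigProj A μ i j = eigProj A μ j i := by
  have h1 : eigProj A μ i j
      = (inner ℝ (EuclideanSpace.single i (1:ℝ)) (Pmap A μ (EuclideanSpace.single j 1)) : ℝ) := by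
    rw [EuclideanSpace.inner_single_left]; simp [eigProj]
  have h2 : eigProj A μ j i
      = (inner ℝ (EuclideanSpace.single j (1:ℝ)) (Pmap A μ (EuclideanSpace.single i 1)) : ℝ) := by
    rw [EuclideanSpace.inner_single_left]; simp [eigProj]
  rw [h1, h2, real_inner_comm]
  exact Submodule.inner_starProjection_left_eq_right _ _ _

lemma isEigenProjection_eigProj (A : Matrix V V ℝ) (μ : ℝ) :
    IsEigenProjection A μ (eigProj A μ) := by
  have hcol : ∀ (x : V → ℝ),
      (eigProj A μ).mulVec x = (eucEquiv V).symm (Pmap A μ (eucEquiv V x)) := by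
    intro x; funext i; exact mulVec_eigProj A μ x i
  refine ⟨?_, ?_, ?_, ?_⟩
  · ext i j
    have h0 : (eigProj A μ * eigProj A μ) i j
        = ((eigProj A μ).mulVec fun k => eigProj A μ k j) i := by
      simp [Matrix.mulVec, dotProduct, Matrix.mul_apply]
    rw [h0]
    have hc : (fun k => eigProj A μ k j)
        = (eucEquiv V).symm (Pmap A μ (EuclideanSpace.single j 1)) := rfl
    rw [hc, mulVec_eigProj]
    have h1 : eucEquiv V ((eucEquiv V).symm (Pmap A μ (EuclideanSpace.single j 1)))
        = Pmap A μ (EuclideanSpace.single j 1) := (eucEquiv V).apply_symm_apply _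
    rw [h1, Pmap_idem]
    rfl
  · ext i j; exact eigProj_symm A μ j i
  · intro x
    have hm := (Pmap_isProj A μ).map_mem (eucEquiv V x)
    rw [mem_eigSp] at hm
    rw [hcol]
    exact hm
  · intro y hy
    have hmem : eucEquiv V y ∈ eigSp A μ := by
      rw [mem_eigSp, (eucEquiv V).symm_apply_apply]; exact hy
    rw [hcol, (Pmap_isProj A μ).map_id _ hmem, (eucEquiv V).symm_apply_apply]

lemma trace_eigProj (A : Matrix V V ℝ) (μ : ℝ) :
    (eigProj A μ).trace
      = (Module.finrank ℝ (Module.End.eigenspace (Matrix.toLin' A) μ) : ℝ) := by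
  let b : Module.Basis V ℝ (EuclideanSpace ℝ V) := (Pi.basisFun ℝ V).map (eucEquiv V)
  have hmat : LinearMap.toMatrix b b (Pmap A μ) = eigProj A μ := by
    ext i j
    rw [LinearMap.toMatrix_apply]
    have hb : b j = EuclideanSpace.single j 1 := by
      simp only [b, Module.Basis.map_apply, Pi.basisFun_apply]
      rfl
    rw [hb]
    simp only [b, Module.Basis.map_repr, LinearEquiv.trans_apply, Pi.basisFun_repr]
    rfl
  have ht := LinearMap.trace_eq_matrix_trace ℝ b (Pmap A μ)
  rw [hmat] at ht
  rw [← ht, (Pmap_isProj A μ).trace, finrank_eigSp]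

lemma mulVec_single' (M : Matrix V V ℝ) (j : V) :
    M.mulVec (Pi.single j 1) = fun i => M i j := by
  funext i
  simp [Matrix.mulVec, dotProduct, Pi.single_apply]

lemma isEigenProjection_unique {A : Matrix V V ℝ} {μ : ℝ} {E₁ E₂ : Matrix V V ℝ}
    (h₁ : IsEigenProjection A μ E₁) (h₂ : IsEigenProjection A μ E₂) : E₁ = E₂ := by
  have key : ∀ (F₁ F₂ : Matrix V V ℝ), IsEigenProjection A μ F₁ → IsEigenProjection A μ F₂ →
      F₁ * F₂ = F₂ := by
    intro F₁ F₂ hF₁ hF₂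
    ext i j
    have h0 : (F₁ * F₂) i j = (F₁.mulVec (F₂.mulVec (Pi.single j 1))) i := by
      rw [Matrix.mulVec_mulVec, mulVec_single']
    rw [h0, hF₁.2.2.2 _ (hF₂.2.2.1 (Pi.single j 1)), mulVec_single']
  have h12 := key E₁ E₂ h₁ h₂
  have h21 := key E₂ E₁ h₂ h₁
  have ht := congrArg Matrix.transpose h12
  rw [Matrix.transpose_mul, h₁.2.1, h₂.2.1] at ht
  rw [← ht, h21]

omit [DecidableEq V] in
lemma mulVec_perm (M : Matrix V V ℝ) (σ : Equiv.Perm V) (x : V → ℝ) (i : V) :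
    (Matrix.of fun a b => M (σ a) (σ b)).mulVec x i
      = M.mulVec (fun j => x (σ.symm j)) (σ i) := by
  simp only [Matrix.mulVec, dotProduct, Matrix.of_apply]
  rw [← Equiv.sum_comp σ (fun j => M (σ i) j * x (σ.symm j))]
  simp

omit [DecidableEq V] in
lemma isEigenProjection_perm {A : Matrix V V ℝ} {μ : ℝ} {E : Matrix V V ℝ}
    (hE : IsEigenProjection A μ E) (σ : Equiv.Perm V)
    (hA : ∀ i j, A (σ i) (σ j) = A i j) :
    IsEigenProjection A μ (Matrix.of fun a b => E (σ a) (σ b)) := by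
  have hAeq : A = Matrix.of (fun a b => A (σ a) (σ b)) := by
    ext a b; exact (hA a b).symm
  have hAmul : ∀ (x : V → ℝ) (i : V),
      A.mulVec x i = A.mulVec (fun j => x (σ.symm j)) (σ i) := by
    intro x i
    conv_lhs => rw [hAeq]
    exact mulVec_perm A σ x i
  have hEsym : ∀ a b, E a b = E b a := by
    intro a b
    conv_lhs => rw [← hE.2.1]
    rfl
  refine ⟨?_, ?_, ?_, ?_⟩
  · ext i j
    simp only [Matrix.mul_apply, Matrix.of_apply]
    have hs : ∑ k, E (σ i) (σ k) * E (σ k) (σ j) = ∑ k, E (σ i) k * E k (σ j) :=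
      Equiv.sum_comp σ (fun k => E (σ i) k * E k (σ j))
    rw [hs, ← Matrix.mul_apply, hE.1]
  · ext i j
    simp only [Matrix.transpose_apply, Matrix.of_apply]
    exact hEsym (σ j) (σ i)
  · intro x
    have hcol : (Matrix.of fun a b => E (σ a) (σ b)).mulVec x
        = fun i => E.mulVec (fun j => x (σ.symm j)) (σ i) := funext (mulVec_perm E σ x)
    rw [hcol]
    funext i
    rw [hAmul (fun i => E.mulVec (fun j => x (σ.symm j)) (σ i)) i]
    have h2 : (fun j => (fun i => E.mulVec (fun j => x (σ.symm j)) (σ i)) (σ.symm j))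
        = E.mulVec (fun j => x (σ.symm j)) := by
      funext j; simp
    rw [h2, hE.2.2.1 (fun j => x (σ.symm j))]
    simp
  · intro y hy
    have hy' : A.mulVec (fun j => y (σ.symm j)) = μ • (fun j => y (σ.symm j)) := by
      funext k
      obtain ⟨i, rfl⟩ := σ.surjective k
      rw [← hAmul y i, hy]
      simp
    have hfix := hE.2.2.2 _ hy'
    funext i
    rw [mulVec_perm E σ y i, hfix]
    simp

end AuxEigenProj

theorem stmt9 {G : Type*} [Group G] [Fintype G] [DecidableEq G] (C : Finset G)
    (h1 : (1 : G) ∉ C) (hinv : ∀ c ∈ C, c⁻¹ ∈ C)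
    (hnorm : ∀ x : G, ∀ c ∈ C, x⁻¹ * c * x ∈ C)
    (H : Subgroup G)
    (hH : (H : Set G) = {g : G | StronglyCospectral (cayleyAdj C) 1 g})
    (μ : ℝ) (hμ : Module.End.HasEigenvalue (Matrix.toLin' (cayleyAdj C)) μ) :
    Module.finrank ℝ (Module.End.eigenspace (Matrix.toLin' (cayleyAdj C)) μ) * Nat.card H
      ≤ Fintype.card G := by
  classical
  set A := cayleyAdj C with hAdef
  set E := eigProj A μ with hEdef
  set m := Module.finrank ℝ (Module.End.eigenspace (Matrix.toLin' A) μ) with hmdef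
  set n := Fintype.card G with hndef
  have hEP : IsEigenProjection A μ E := isEigenProjection_eigProj A μ
  -- invariance of E under right translations
  have hinvE : ∀ x g h : G, E (g * x) (h * x) = E g h := by
    intro x g h
    have hAinv : ∀ i j : G, A (Equiv.mulRight x i) (Equiv.mulRight x j) = A i j := by
      intro i j
      have hgrp : (j * x) * (i * x)⁻¹ = j * i⁻¹ := by group
      simp only [hAdef, cayleyAdj, Equiv.coe_mulRight, Matrix.of_apply, hgrp]
    have hperm := isEigenProjection_unique (isEigenProjection_perm hEP (Equiv.mulRight x) hAinv) hEP
    have h2 := congrFun (congrFun hperm g) h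
    simpa using h2
  have hdiag : ∀ g : G, E g g = E 1 1 := by
    intro g
    have := hinvE g 1 1
    simpa using this
  -- trace computation
  have htr : (n : ℝ) * E 1 1 = (m : ℝ) := by
    have ht := trace_eigProj A μ
    rw [Matrix.trace] at ht
    have hsum : ∑ g : G, E g g = (n : ℝ) * E 1 1 := by
      rw [Finset.sum_congr rfl (fun g _ => hdiag g), Finset.sum_const, nsmul_eq_mul]
      simp [hndef]
    rw [← hsum]
    simpa [Matrix.diag] using ht
  -- sum of squares of row 1
  have hsq : ∑ h : G, E 1 h * E 1 h = E 1 1 := by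
    have h11 := congrFun (congrFun hEP.1 1) 1
    rw [Matrix.mul_apply] at h11
    rw [← h11]
    have hEsym : ∀ a b : G, E a b = E b a := fun a b => eigProj_symm A μ a b
    exact Finset.sum_congr rfl fun k _ => by rw [hEsym k 1]
  -- strongly cospectral entries
  have hSC : ∀ h : G, h ∈ H → E 1 h * E 1 h = E 1 1 * E 1 1 := by
    intro h hh
    have hmem : h ∈ (H : Set G) := hh
    rw [hH] at hmem
    rcases hmem μ E hEP with he | he
    · rw [mulVec_single', mulVec_single'] at he
      have := congrFun he 1
      beta_reduce at this
      rw [← this]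
    · rw [mulVec_single', mulVec_single'] at he
      have := congrFun he 1
      simp only [Pi.neg_apply] at this
      rw [this]
      ring
  -- positivity facts
  have hne : Module.End.eigenspace (Matrix.toLin' A) μ ≠ ⊥ := hμ
  have hm0' : m ≠ 0 := fun h0 => hne (Submodule.finrank_eq_zero.mp h0)
  have hm1 : 1 ≤ m := Nat.one_le_iff_ne_zero.mpr hm0'
  have hn0 : (0 : ℝ) < n := by
    have : 0 < n := Fintype.card_pos
    exact_mod_cast this
  have hm0 : (0 : ℝ) < m := by exact_mod_cast hm1
  have hc0 : 0 < E 1 1 := by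
    have : (n : ℝ) * E 1 1 = m := htr
    nlinarith
  -- the subgroup as a finset
  set t := Set.toFinset (H : Set G) with htdef
  have hcardt : (t.card : ℝ) = (Nat.card H : ℝ) := by
    have h1' : Nat.card (H : Set G) = t.card := by
      rw [Nat.card_coe_set_eq, Set.ncard_eq_toFinset_card']
    rw [← h1', SetLike.coe_sort_coe]
  have hsub : ∑ h ∈ t, E 1 h * E 1 h ≤ ∑ h : G, E 1 h * E 1 h :=
    Finset.sum_le_sum_of_subset_of_nonneg (Finset.subset_univ t)
      (fun i _ _ => mul_self_nonneg _)
  have hconst : ∑ h ∈ t, E 1 h * E 1 h = (t.card : ℝ) * (E 1 1 * E 1 1) := by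
    rw [Finset.sum_congr rfl (fun h hh => hSC h (by simpa [htdef, Set.mem_toFinset] using hh)),
      Finset.sum_const, nsmul_eq_mul]
  have hkey : (t.card : ℝ) * (E 1 1 * E 1 1) ≤ E 1 1 := by
    rw [← hconst, ← hsq]; exact hsub
  -- final arithmetic
  have hfinal : ((m : ℝ) * (Nat.card H : ℝ)) ≤ (n : ℝ) := by
    rw [← hcardt]
    have hmm : ((m : ℝ) * t.card) * E 1 1 ≤ (n : ℝ) * E 1 1 := by
      have hexp : ((m : ℝ) * t.card) * E 1 1 = (t.card : ℝ) * ((n:ℝ) * E 1 1) * E 1 1 := by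
        rw [htr]; ring
      rw [hexp]
      nlinarith [hkey, hc0, hn0]
    exact le_of_mul_le_mul_right hmm hc0
  exact_mod_cast hfinal
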